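/- Let s_1, ..., s_n be pairwise distinct real scores, b ≥ 1, and m1 < m2 ≤ n with m1 ≥ b. Then Top-b(s_1,...,s_{m2}) equals the top-b index set computed only over the union of Top-b(s_1,...,s_{m1}) and the fresh indices {m1+1,...,m2}. That is, chunked computation with eviction after each chunk yields exactly the same retained set as computing top-b over the full prefix. -/
import Mathlib

open Finset

/-- Top-b over an arbitrary finite index set `A`: the elements of `A` whose scores
are among the `min(b,|A|)` largest (unique when scores are pairwise distinct). -/
noncomputable def topBOn (s : ℕ → ℝ) (b : ℕ) (A : Finset ℕ) : Finset ℕ :=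
  A.filter fun j => (A.filter fun k => s j < s k).card < b

/-- `topB s b i` : top-b over the prefix `{1,…,i}`. -/
noncomputable def topB (s : ℕ → ℝ) (b i : ℕ) : Finset ℕ :=
  topBOn s b (Finset.Icc 1 i)

lemma rank_strict (s : ℕ → ℝ) (S : Finset ℕ) {j j' : ℕ} (hj' : j' ∈ S)
    (h : s j < s j') :
    (S.filter fun k => s j' < s k).card < (S.filter fun k => s j < s k).card := by
  apply Finset.card_lt_card
  constructor
  · intro k hk
    simp only [Finset.mem_filter] at *
    exact ⟨hk.1, h.trans hk.2⟩
  · intro hsub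
    have := hsub (Finset.mem_filter.mpr ⟨hj', h⟩)
    simp only [Finset.mem_filter] at this
    exact lt_irrefl _ this.2

lemma topBOn_card (s : ℕ → ℝ) (b : ℕ) (S : Finset ℕ)
    (hinj : Set.InjOn s S) : (topBOn s b S).card = min b S.card := by
  set r : ℕ → ℕ := fun j => (S.filter fun k => s j < s k).card with hr
  have hrinj : Set.InjOn r S := by
    intro x hx y hy hxy
    by_contra hne
    have hsne : s x ≠ s y := fun h => hne (hinj hx hy h)
    rcases lt_or_gt_of_ne hsne with h | h
    · exact absurd hxy.symm (Nat.ne_of_lt (rank_strict s S hy h))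
    · exact absurd hxy (Nat.ne_of_lt (rank_strict s S hx h))
  have hlt : ∀ j ∈ S, r j < S.card := by
    intro j hj
    have hsub : (S.filter fun k => s j < s k) ⊆ S.erase j := by
      intro k hk
      simp only [Finset.mem_filter] at hk
      refine Finset.mem_erase.mpr ⟨?_, hk.1⟩
      rintro rfl; exact lt_irrefl _ hk.2
    calc r j ≤ (S.erase j).card := Finset.card_le_card hsub
      _ < S.card := Finset.card_erase_lt_of_mem hj
  have himg : S.image r = Finset.range S.card := by
    apply Finset.eq_of_subset_of_card_le
    · intro x hx
      obtain ⟨j, hj, rfl⟩ := Finset.mem_image.mp hx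
      exact Finset.mem_range.mpr (hlt j hj)
    · rw [Finset.card_range, Finset.card_image_of_injOn hrinj]
  have h1 : topBOn s b S = S.filter (fun j => (fun x => x < b) (r j)) := rfl
  have h2 : (topBOn s b S).card = ((S.filter fun j => r j < b).image r).card := by
    rw [h1, Finset.card_image_of_injOn (hrinj.mono (by intro x hx; exact Finset.mem_coe.mpr (Finset.mem_of_mem_filter x (Finset.mem_coe.mp hx))))]
  have h3 : (S.filter fun j => r j < b).image r
      = (S.image r).filter (fun x => x < b) :=
    (Finset.filter_image (p := fun x => x < b) (f := r) (s := S)).symm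
  rw [h2, h3, himg]
  have : (Finset.range S.card).filter (fun x => x < b) = Finset.range (min b S.card) := by
    ext x
    simp only [Finset.mem_filter, Finset.mem_range, lt_min_iff]
    tauto
  rw [this, Finset.card_range]

/-- chunked computation with eviction after each chunk yields exactly
the same retained set as computing top-b over the full prefix. -/
theorem topB_chunked (s : ℕ → ℝ) (n b m1 m2 : ℕ) (hb : 1 ≤ b)
    (hinj : Set.InjOn s (Set.Icc 1 n))
    (hbm1 : b ≤ m1) (h12 : m1 < m2) (h2n : m2 ≤ n) :
    topB s b m2 = topBOn s b (topB s b m1 ∪ Finset.Icc (m1 + 1) m2) := by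
  set A : Finset ℕ := Finset.Icc 1 m2 with hA
  set B : Finset ℕ := topB s b m1 ∪ Finset.Icc (m1 + 1) m2 with hB
  have hT1 : topB s b m1 ⊆ Finset.Icc 1 m1 := Finset.filter_subset _ _
  have hBA : B ⊆ A := by
    intro x hx
    rcases Finset.mem_union.mp hx with h | h
    · have := hT1 h
      simp only [hA, Finset.mem_Icc] at this ⊢
      omega
    · simp only [hA, Finset.mem_Icc] at h ⊢
      omega
  -- evicted elements have ≥ b bigger elements in Icc 1 m1
  have hev : ∀ j ∈ Finset.Icc 1 m1, j ∉ topB s b m1 →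
      b ≤ ((Finset.Icc 1 m1).filter fun k => s j < s k).card := by
    intro j hj hnot
    by_contra h
    exact hnot (Finset.mem_filter.mpr ⟨hj, by omega⟩)
  ext j
  simp only [topB, topBOn, Finset.mem_filter, ← hA]
  constructor
  · rintro ⟨hjA, hcA⟩
    have hjB : j ∈ B := by
      by_contra hjB
      simp only [hB, Finset.mem_union, not_or] at hjB
      have hjm1 : j ∈ Finset.Icc 1 m1 := by
        simp only [hA, Finset.mem_Icc] at hjA ⊢
        have := hjB.2
        simp only [Finset.mem_Icc] at this
        omega
      have hbig := hev j hjm1 hjB.1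
      have : ((Finset.Icc 1 m1).filter fun k => s j < s k) ⊆
          (A.filter fun k => s j < s k) := by
        apply Finset.filter_subset_filter
        intro x hx
        simp only [hA, Finset.mem_Icc] at hx ⊢
        omega
      have := Finset.card_le_card this
      omega
    refine ⟨hjB, ?_⟩
    calc (B.filter fun k => s j < s k).card
        ≤ (A.filter fun k => s j < s k).card :=
          Finset.card_le_card (Finset.filter_subset_filter _ hBA)
      _ < b := hcA
  · rintro ⟨hjB, hcB⟩
    refine ⟨hBA hjB, ?_⟩
    by_contra hcA
    push_neg at hcA
    set S : Finset ℕ := A.filter fun k => s j < s k with hS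
    have hSn : (S : Set ℕ) ⊆ Set.Icc 1 n := by
      intro x hx
      have : x ∈ A := Finset.mem_of_mem_filter x (Finset.mem_coe.mp hx)
      simp only [hA, Finset.mem_Icc] at this
      simp only [Set.mem_Icc]
      omega
    have hcard : (topBOn s b S).card = b := by
      rw [topBOn_card s b S (hinj.mono hSn)]
      omega
    have hsub : topBOn s b S ⊆ B.filter fun k => s j < s k := by
      intro t ht
      have htS : t ∈ S := Finset.mem_of_mem_filter t ht
      have htA : t ∈ A := Finset.mem_of_mem_filter t htS
      have hjt : s j < s t := (Finset.mem_filter.mp htS).2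
      have htcnt : (S.filter fun k => s t < s k).card < b :=
        (Finset.mem_filter.mp ht).2
      refine Finset.mem_filter.mpr ⟨?_, hjt⟩
      by_contra htB
      simp only [hB, Finset.mem_union, not_or] at htB
      have htm1 : t ∈ Finset.Icc 1 m1 := by
        simp only [hA, Finset.mem_Icc] at htA ⊢
        have := htB.2
        simp only [Finset.mem_Icc] at this
        omega
      have hbig := hev t htm1 htB.1
      have hsub2 : ((Finset.Icc 1 m1).filter fun k => s t < s k) ⊆
          (S.filter fun k => s t < s k) := by
        intro x hx
        simp only [Finset.mem_filter, Finset.mem_Icc] at hx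
        refine Finset.mem_filter.mpr ⟨Finset.mem_filter.mpr ⟨?_, hjt.trans hx.2⟩, hx.2⟩
        simp only [hA, Finset.mem_Icc]
        omega
      have := Finset.card_le_card hsub2
      omega
    have := Finset.card_le_card hsub
    omega
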